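/- Let 0 < s < 1, let 0 < a < b, and let p, q > 0 with p + q = 1. Then (p a + q b)^s − (p a^s + q b^s) ≤ C_s · [2((a+b)/2)^s − a^s − b^s], where C_s = (1−s) s^{s/(1−s)} / (2^{1−s} − 1). -/

import Mathlib

open Real Set

noncomputable section

namespace CharPow








/-- Bernoulli tangent inequality for concave power: for `0 ≤ σ ≤ 1`, `0 ≤ X`, `0 < b`,
`X ^ σ ≤ b ^ σ + σ * b ^ (σ - 1) * (X - b)`. -/
lemma tangent_concave {σ X b : ℝ} (hσ0 : 0 ≤ σ) (hσ1 : σ ≤ 1) (hX : 0 ≤ X) (hb : 0 < b) :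
    X ^ σ ≤ b ^ σ + σ * b ^ (σ - 1) * (X - b) := by
  have hr : 0 ≤ X / b := div_nonneg hX hb.le
  have h := rpow_one_add_le_one_add_mul_self (s := X / b - 1) (by linarith) hσ0 hσ1
  rw [add_sub_cancel] at h
  have hbσ : 0 < b ^ σ := rpow_pos_of_pos hb _
  have h2 : (X / b) ^ σ * b ^ σ ≤ (1 + σ * (X / b - 1)) * b ^ σ := by
    exact mul_le_mul_of_nonneg_right h hbσ.le
  rw [div_rpow hX hb.le, div_mul_cancel₀] at h2
  · calc X ^ σ ≤ (1 + σ * (X / b - 1)) * b ^ σ := h2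
      _ = b ^ σ + σ * b ^ (σ - 1) * (X - b) := by
          rw [rpow_sub_one hb.ne']
          field_simp
  · exact (rpow_pos_of_pos hb _).ne'

/-- Bernoulli tangent inequality for convex negative power: for `c ≤ -1`, `0 < X`, `0 < b`,
`b ^ c + c * b ^ (c - 1) * (X - b) ≤ X ^ c`. -/
lemma tangent_convex_neg {c X b : ℝ} (hc : c ≤ -1) (hX : 0 < X) (hb : 0 < b) :
    b ^ c + c * b ^ (c - 1) * (X - b) ≤ X ^ c := by
  set r := X / b with hr
  have hr0 : 0 < r := div_pos hX hb
  -- first: 1 + c * (r - 1) ≤ r ^ c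
  have key : 1 + c * (r - 1) ≤ r ^ c := by
    have hz : -1 ≤ r⁻¹ - 1 := by
      have : 0 < r⁻¹ := inv_pos.mpr hr0
      linarith
    have h := one_add_mul_self_le_rpow_one_add hz (p := -c) (by linarith)
    rw [add_sub_cancel] at h
    have hinv : (r⁻¹) ^ (-c) = r ^ c := by
      rw [← Real.rpow_neg_one r, ← Real.rpow_mul hr0.le]
      norm_num
    rw [hinv] at h
    have h2 : 1 + c * (r - 1) ≤ 1 + -c * (r⁻¹ - 1) := by
      have hcneg : 0 ≤ -c := by linarith
      have hid : (1 + -c * (r⁻¹ - 1)) - (1 + c * (r - 1)) = (-c) * (r - 1)^2 / r := by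
        field_simp
        ring
      have hpos : 0 ≤ (-c) * (r - 1)^2 / r := by positivity
      linarith
    linarith
  have hbc : 0 < b ^ c := rpow_pos_of_pos hb _
  have h2 := mul_le_mul_of_nonneg_right key hbc.le
  have hXc : r ^ c * b ^ c = X ^ c := by
    rw [hr, div_rpow hX.le hb.le, div_mul_cancel₀]
    exact hbc.ne'
  rw [hXc] at h2
  calc b ^ c + c * b ^ (c - 1) * (X - b)
      = (1 + c * (r - 1)) * b ^ c := by
        rw [rpow_sub_one hb.ne', hr]
        field_simp
    _ ≤ X ^ c := h2

/-- `x ^ s ≤ (1-s) * s^(s/(1-s)) + x` for `x ≥ 0`, `0 < s < 1`. -/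
lemma rpow_le_A_add {s x : ℝ} (hs0 : 0 < s) (hs1 : s < 1) (hx : 0 ≤ x) :
    x ^ s ≤ (1 - s) * s ^ (s / (1 - s)) + x := by
  set θ : ℝ := s ^ ((1:ℝ) / (1 - s)) with hθ
  have hθ0 : 0 < θ := rpow_pos_of_pos hs0 _
  have h := tangent_concave hs0.le hs1.le hx hθ0
  have h1s : (1:ℝ) - s ≠ 0 := by linarith
  have hθs : θ ^ s = s ^ (s / (1 - s)) := by
    rw [hθ, ← Real.rpow_mul hs0.le]
    congr 1
    field_simp
  have hθ1 : s * θ ^ (s - 1) = 1 := by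
    rw [hθ, ← Real.rpow_mul hs0.le]
    have : (1:ℝ) / (1 - s) * (s - 1) = -1 := by
      field_simp
      ring
    rw [this, rpow_neg_one]
    field_simp
  have hθval : θ = s ^ (s / (1 - s)) * s := by
    rw [hθ, ← Real.rpow_add_one hs0.ne']
    congr 1
    field_simp
    ring
  calc x ^ s ≤ θ ^ s + s * θ ^ (s - 1) * (x - θ) := h
    _ = θ ^ s + (x - θ) := by rw [hθ1]; ring
    _ = (1 - s) * s ^ (s / (1 - s)) + x := by rw [hθs, hθval]; ring










def hh (s t : ℝ) : ℝ := 2 ^ (1 - s) * (1 + t) ^ s - 1 - t ^ s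
def NN (s p t : ℝ) : ℝ := (1 - p + p * t) ^ s - p * t ^ s - (1 - p)
def KK (s p C t : ℝ) : ℝ := C * hh s t - NN s p t
def KK' (s p C t : ℝ) : ℝ :=
  C * (s * (2 ^ (1 - s) * (1 + t) ^ (s - 1) - t ^ (s - 1)))
    - s * p * ((1 - p + p * t) ^ (s - 1) - t ^ (s - 1))
def KK'' (s p C t : ℝ) : ℝ :=
  C * (s * (s - 1) * (2 ^ (1 - s) * (1 + t) ^ (s - 2) - t ^ (s - 2)))
    - s * (s - 1) * p * (p * (1 - p + p * t) ^ (s - 2) - t ^ (s - 2))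
def f1 (s p t : ℝ) : ℝ := 1 - p * (t ^ (2 - s) * (1 - p + p * t) ^ (s - 2))
def f2 (s t : ℝ) : ℝ := 1 - 2 ^ (1 - s) * (t ^ (2 - s) * (1 + t) ^ (s - 2))
def kap (s p t : ℝ) : ℝ := p * f1 s p t / f2 s t

variable {s p C t : ℝ}

lemma dpos (hp0 : 0 < p) (hp1 : p < 1) (ht : 0 ≤ t) : 0 < 1 - p + p * t := by nlinarith

lemma oneaddpos (ht : 0 < t) : 0 < 1 + t := by linarith

lemma hd_base (hp0 : 0 < p) : HasDerivAt (fun t : ℝ => 1 - p + p * t) p t := by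
  simpa using ((hasDerivAt_id t).const_mul p).const_add (1 - p)

lemma hd_oneadd : HasDerivAt (fun t : ℝ => 1 + t) 1 t := (hasDerivAt_id t).const_add 1

lemma hasDerivAt_KK (hp0 : 0 < p) (hp1 : p < 1) (ht : 0 < t) :
    HasDerivAt (KK s p C) (KK' s p C t) t := by
  have hd : 0 < 1 - p + p * t := dpos hp0 hp1 ht.le
  have h1t : 0 < 1 + t := oneaddpos ht
  have hA := (hd_oneadd (t := t)).rpow_const (p := s) (Or.inl h1t.ne')
  have hB := (hasDerivAt_id t).rpow_const (p := s) (Or.inl ht.ne')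
  have hD := (hd_base (t := t) hp0).rpow_const (p := s) (Or.inl hd.ne')
  have h := (((hA.const_mul ((2:ℝ) ^ (1 - s))).sub_const 1).sub hB).const_mul C |>.sub
      ((hD.sub (hB.const_mul p)).sub_const (1 - p))
  refine h.congr_deriv ?_
  simp only [KK', id_eq, id]
  ring

lemma hasDerivAt_KK' (hp0 : 0 < p) (hp1 : p < 1) (ht : 0 < t) :
    HasDerivAt (KK' s p C) (KK'' s p C t) t := by
  have hd : 0 < 1 - p + p * t := dpos hp0 hp1 ht.le
  have h1t : 0 < 1 + t := oneaddpos ht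
  have hA := (hd_oneadd (t := t)).rpow_const (p := s - 1) (Or.inl h1t.ne')
  have hB := (hasDerivAt_id t).rpow_const (p := s - 1) (Or.inl ht.ne')
  have hD := (hd_base (t := t) hp0).rpow_const (p := s - 1) (Or.inl hd.ne')
  have h := (((hA.const_mul ((2:ℝ) ^ (1 - s))).sub hB).const_mul s).const_mul C |>.sub
      ((hD.sub hB).const_mul (s * p))
  refine h.congr_deriv ?_
  simp only [KK'', id_eq, id, show s - 1 - 1 = s - 2 by ring]
  ring

lemma hasDerivAt_f1 (hp0 : 0 < p) (hp1 : p < 1) (ht : 0 < t) :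
    HasDerivAt (f1 s p)
      (-(p * (1 - p) * (2 - s) * (t ^ (1 - s) * (1 - p + p * t) ^ (s - 3)))) t := by
  have hd : 0 < 1 - p + p * t := dpos hp0 hp1 ht.le
  have hX := (hasDerivAt_id t).rpow_const (p := 2 - s) (Or.inl ht.ne')
  have hD := (hd_base (t := t) hp0).rpow_const (p := s - 2) (Or.inl hd.ne')
  have h := ((hX.mul hD).const_mul p).neg.const_add 1
  refine h.congr_deriv ?_
  simp only [id_eq, id, show 2 - s - 1 = 1 - s by ring, show s - 2 - 1 = s - 3 by ring]
  have e1 : (1 - p + p * t) ^ (s - 2) = (1 - p + p * t) ^ (s - 3) * (1 - p + p * t) := by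
    rw [← Real.rpow_add_one hd.ne']; ring_nf
  have e2 : t ^ (2 - s) = t ^ (1 - s) * t := by
    rw [← Real.rpow_add_one ht.ne']; ring_nf
  rw [e1, e2]; ring

lemma hasDerivAt_f2 (ht : 0 < t) :
    HasDerivAt (f2 s) (-(2 ^ (1 - s) * (2 - s) * (t ^ (1 - s) * (1 + t) ^ (s - 3)))) t := by
  have h1t : 0 < 1 + t := oneaddpos ht
  have hX := (hasDerivAt_id t).rpow_const (p := 2 - s) (Or.inl ht.ne')
  have hD := (hd_oneadd (t := t)).rpow_const (p := s - 2) (Or.inl h1t.ne')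
  have h := ((hX.mul hD).const_mul ((2:ℝ) ^ (1 - s))).neg.const_add 1
  refine h.congr_deriv ?_
  simp only [id_eq, id, show 2 - s - 1 = 1 - s by ring, show s - 2 - 1 = s - 3 by ring]
  have e1 : (1 + t) ^ (s - 2) = (1 + t) ^ (s - 3) * (1 + t) := by
    rw [← Real.rpow_add_one h1t.ne']; ring_nf
  have e2 : t ^ (2 - s) = t ^ (1 - s) * t := by
    rw [← Real.rpow_add_one ht.ne']; ring_nf
  rw [e1, e2]; ring

/-- KK'' in factored form. -/
lemma KK''_eq (ht : 0 < t) :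
    KK'' s p C t = s * (1 - s) * t ^ (s - 2) * (C * f2 s t - p * f1 s p t) := by
  have h1 : t ^ (s - 2) * t ^ (2 - s) = 1 := by
    rw [← Real.rpow_add ht]; norm_num
  simp only [KK'', f1, f2]
  linear_combination (s * (1 - s) * (C * 2 ^ (1 - s) * (1 + t) ^ (s - 2)
    - p * p * (1 - p + p * t) ^ (s - 2))) * h1

lemma two_rpow_id : (2:ℝ) ^ (1 - s) * 2 ^ s = 2 := by
  rw [← Real.rpow_add (by norm_num)]; norm_num

lemma KK_one : KK s p C 1 = 0 := by
  have h2 := two_rpow_id (s := s)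
  have e1 : ((1:ℝ) + 1) = 2 := by norm_num
  have e3 : (1 - p + p * 1 : ℝ) = 1 := by ring
  simp only [KK, hh, NN, e1, e3, Real.one_rpow]
  linear_combination C * h2

lemma KK'_one : KK' s p C 1 = 0 := by
  have h2 : (2:ℝ) ^ (1 - s) * 2 ^ (s - 1) = 1 := by
    rw [← Real.rpow_add (by norm_num)]; norm_num
  have e1 : ((1:ℝ) + 1) = 2 := by norm_num
  have e3 : (1 - p + p * 1 : ℝ) = 1 := by ring
  simp only [KK', e1, e3, Real.one_rpow]
  linear_combination (C * s) * h2

lemma KK_zero (hs0 : 0 < s) : KK s p C 0 = C * (2 ^ (1 - s) - 1) - ((1 - p) ^ s - (1 - p)) := by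
  simp only [KK, hh, NN, mul_zero, add_zero, Real.one_rpow, Real.zero_rpow hs0.ne']
  ring








lemma rpow_ratio_le (hs1 : s < 1) {x y : ℝ} (hx : 0 < x) (hxy : x ≤ y) :
    x ^ (2 - s) * y ^ (s - 2) ≤ 1 := by
  have hy : 0 < y := lt_of_lt_of_le hx hxy
  have h1 : y ^ (s - 2) = (y ^ (2 - s))⁻¹ := by
    rw [← Real.rpow_neg hy.le]; ring_nf
  rw [h1, ← div_eq_mul_inv, div_le_one (rpow_pos_of_pos hy _)]
  exact Real.rpow_le_rpow hx.le hxy (by linarith)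

/-- `f2 s t ≥ 1/2` for `0 < t ≤ 1`. -/
lemma f2_ge (hs1 : s < 1) (ht : 0 < t) (ht1 : t ≤ 1) : 1 / 2 ≤ f2 s t := by
  have h1t : 0 < 1 + t := by linarith
  have key : 2 ^ (1 - s) * (t ^ (2 - s) * (1 + t) ^ (s - 2)) ≤ 1 / 2 := by
    have h2t : 0 < 2 * t := by linarith
    have hle : 2 * t ≤ 1 + t := by linarith
    have h := rpow_ratio_le hs1 h2t hle
    have e : (2 * t) ^ (2 - s) = 2 ^ (2 - s) * t ^ (2 - s) :=
      Real.mul_rpow (by norm_num) ht.le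
    rw [e] at h
    have e2 : (2:ℝ) ^ (2 - s) = 2 * 2 ^ (1 - s) := by
      rw [show (2:ℝ) - s = 1 + (1 - s) by ring, Real.rpow_add (by norm_num), Real.rpow_one]
    nlinarith [rpow_pos_of_pos ht (2 - s), rpow_pos_of_pos h1t (s - 2),
      mul_pos (rpow_pos_of_pos ht (2 - s)) (rpow_pos_of_pos h1t (s - 2))]
  have : 0 < 2 ^ (1 - s) * (t ^ (2 - s) * (1 + t) ^ (s - 2)) := by positivity
  simp only [f2]; linarith

lemma f1_ge (hs1 : s < 1) (hp0 : 0 < p) (hp1 : p < 1) (ht : 0 < t) (ht1 : t ≤ 1) :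
    1 - p ≤ f1 s p t := by
  have hd : 0 < 1 - p + p * t := by nlinarith
  have hle : t ≤ 1 - p + p * t := by nlinarith
  have h := rpow_ratio_le hs1 ht hle
  have hpos : 0 < t ^ (2 - s) * (1 - p + p * t) ^ (s - 2) := by positivity
  simp only [f1]; nlinarith

lemma f2_one : f2 s 1 = 1 / 2 := by
  have h2 : (2:ℝ) ^ (1 - s) * 2 ^ (s - 2) = 1 / 2 := by
    rw [← Real.rpow_add (by norm_num)]
    rw [show 1 - s + (s - 2) = -1 by ring, Real.rpow_neg_one]
    norm_num
  simp only [f2, Real.one_rpow, show (1:ℝ) + 1 = 2 by norm_num]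
  linarith [h2]

lemma f1_one : f1 s p 1 = 1 - p := by
  simp only [f1, show (1 - p + p * 1 : ℝ) = 1 by ring, Real.one_rpow]
  ring

set_option maxHeartbeats 1000000 in
/-- The central monotonicity inequality (M): for `1/2 ≤ p < 1`, `0 < t ≤ 1`:
`2^(1-s) * (1+t)^(s-3) * f1 ≤ p*(1-p) * d^(s-3) * f2`. -/
lemma Mineq (hs0 : 0 < s) (hs1 : s < 1) (hp : 1 / 2 ≤ p) (hp1 : p < 1)
    (ht : 0 < t) (ht1 : t ≤ 1) :
    2 ^ (1 - s) * (1 + t) ^ (s - 3) * f1 s p t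
      ≤ p * (1 - p) * (1 - p + p * t) ^ (s - 3) * f2 s t := by
  have hp0 : 0 < p := lt_of_lt_of_le (by norm_num) hp
  have hd : 0 < 1 - p + p * t := by nlinarith
  have h1t : 0 < 1 + t := by linarith
  set d : ℝ := 1 - p + p * t with hdd
  set B : ℝ := (2:ℝ) ^ (1 - s) with hB
  have hBpos : 0 < B := rpow_pos_of_pos (by norm_num) _
  -- difference identity: LHS of goal becomes the (M) inequality after multiplying by (1+t)^(3-s)
  set z : ℝ := (1 + t) / d with hz
  set y : ℝ := t / d with hy
  have hz2 : 2 ≤ z := by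
    rw [hz, le_div_iff₀ hd]; nlinarith
  have hy0 : 0 < y := div_pos ht hd
  have hy1 : y ≤ 1 := by rw [hy, div_le_one hd]; nlinarith
  have hzpos : 0 < z := by linarith
  -- main scalar inequality (M)
  have hM : B ≤ p * (1 - p) * z ^ (3 - s) + B * p * (p - (1 - p)) * y ^ (3 - s) := by
    have hz3 : z ^ (3 - s) = z ^ (2:ℕ) * z ^ (1 - s) := by
      rw [← Real.rpow_natCast z 2, ← Real.rpow_add hzpos]; congr 1; push_cast; ring
    have hz1s : B ≤ z ^ (1 - s) := Real.rpow_le_rpow (by norm_num) hz2 (by linarith)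
    have hy3 : y ^ (3:ℕ) ≤ y ^ (3 - s) := by
      rw [← Real.rpow_natCast y 3]
      exact Real.rpow_le_rpow_of_exponent_ge hy0 hy1 (by push_cast; linarith)
    have hpq : 0 ≤ p - (1 - p) := by linarith
    have hz2e : z ^ (2:ℕ) = (1 + t) ^ 2 / d ^ 2 := by rw [hz, div_pow]
    have hy3e : y ^ (3:ℕ) = t ^ 3 / d ^ 3 := by rw [hy, div_pow]
    have hpoly : 1 ≤ p * (1 - p) * z ^ (2:ℕ) + p * (p - (1 - p)) * y ^ (3:ℕ) := by
      rw [hz2e, hy3e, ← sub_nonneg]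
      have hid : p * (1 - p) * ((1 + t) ^ 2 / d ^ 2) + p * (p - (1 - p)) * (t ^ 3 / d ^ 3) - 1
          = ((1 - p) * (2 * p - 1) * ((1 - p) + p * t * (1 - t + t ^ 2))) / d ^ 3 := by
        field_simp
        ring
      rw [hid]
      have h1 : 0 ≤ (1 - p) := by linarith
      have h2 : 0 ≤ 2 * p - 1 := by linarith
      have h3 : 0 ≤ (1 - p) + p * t * (1 - t + t ^ 2) := by nlinarith
      positivity
    have hpq2 : (0:ℝ) ≤ p * (1 - p) := by nlinarith
    have c1 : z ^ (2:ℕ) * B ≤ z ^ (3 - s) := by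
      rw [hz3]; exact mul_le_mul_of_nonneg_left hz1s (by positivity)
    have step1 : B * 1 ≤ B * (p * (1 - p) * z ^ (2:ℕ) + p * (p - (1 - p)) * y ^ (3:ℕ)) :=
      mul_le_mul_of_nonneg_left hpoly hBpos.le
    have step2 : p * (1 - p) * (z ^ (2:ℕ) * B) ≤ p * (1 - p) * z ^ (3 - s) :=
      mul_le_mul_of_nonneg_left c1 hpq2
    have step3 : B * p * (p - (1 - p)) * y ^ (3:ℕ) ≤ B * p * (p - (1 - p)) * y ^ (3 - s) :=
      mul_le_mul_of_nonneg_left hy3 (by positivity)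
    nlinarith [step1, step2, step3]
  -- now convert (M) into the goal via rpow algebra
  have hE : (1 + t) ^ (s - 3) * (1 + t) ^ (3 - s) = 1 := by
    rw [← Real.rpow_add h1t]; norm_num
  have hzval : z ^ (3 - s) = (1 + t) ^ (3 - s) * d ^ (s - 3) := by
    rw [hz, Real.div_rpow h1t.le hd.le]
    rw [show d ^ (s - 3) = (d ^ (3 - s))⁻¹ by rw [← Real.rpow_neg hd.le]; ring_nf]
    ring
  have hyval : y ^ (3 - s) = t ^ (3 - s) * d ^ (s - 3) := by
    rw [hy, Real.div_rpow ht.le hd.le]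
    rw [show d ^ (s - 3) = (d ^ (3 - s))⁻¹ by rw [← Real.rpow_neg hd.le]; ring_nf]
    ring
  -- expand f1, f2 and check the identity connecting goal with hM
  have ht3 : t ^ (3 - s) = t * t ^ (2 - s) := by
    rw [show (3:ℝ) - s = 2 - s + 1 by ring, Real.rpow_add_one ht.ne']; ring
  have hd2 : d ^ (s - 2) = d * d ^ (s - 3) := by
    rw [show s - 2 = s - 3 + 1 by ring, Real.rpow_add_one hd.ne']; ring
  have hE2 : (1 + t) ^ (s - 2) = (1 + t) * (1 + t) ^ (s - 3) := by
    rw [show s - 2 = s - 3 + 1 by ring, Real.rpow_add_one h1t.ne']; ring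
  -- goal ⟺ hM * (1+t)^(s-3) : prove by nlinarith-style linear_combination
  have expand : p * (1 - p) * d ^ (s - 3) * f2 s t - 2 ^ (1 - s) * (1 + t) ^ (s - 3) * f1 s p t
      = (p * (1 - p) * z ^ (3 - s) + B * p * (p - (1 - p)) * y ^ (3 - s) - B)
        * (1 + t) ^ (s - 3) := by
    have hne : (1 + t) ^ (s - 3) ≠ 0 := (rpow_pos_of_pos h1t _).ne'
    have huinv : (1 + t) ^ (3 - s) = ((1 + t) ^ (s - 3))⁻¹ := by
      rw [show (3:ℝ) - s = -(s - 3) by ring, Real.rpow_neg h1t.le]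
    simp only [f1, f2, ← hdd, hzval, hyval, ht3, hd2, hE2, ← hB, huinv]
    field_simp
    ring
  have hfin : 0 ≤ (p * (1 - p) * z ^ (3 - s) + B * p * (p - (1 - p)) * y ^ (3 - s) - B)
      * (1 + t) ^ (s - 3) := by
    have h1 : 0 ≤ p * (1 - p) * z ^ (3 - s) + B * p * (p - (1 - p)) * y ^ (3 - s) - B := by
      linarith
    have h2 : (0:ℝ) ≤ (1 + t) ^ (s - 3) := (rpow_pos_of_pos h1t _).le
    positivity
  linarith [expand ▸ hfin]




/-- P3: the pointwise second-derivative comparison for `p ≤ 1/2`. -/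
lemma P3 (hs0 : 0 < s) (hs1 : s < 1) (hp0 : 0 < p) (hple : p ≤ 1 / 2)
    (ht : 0 < t) (ht1 : t ≤ 1) :
    2 ^ (1 - s) * (1 + t) ^ (s - 2)
      ≤ (1 - 2 * p) * t ^ (s - 2) + 2 * p ^ 2 * (1 - p + p * t) ^ (s - 2) := by
  have hd : 0 < 1 - p + p * t := by nlinarith
  have h1t : 0 < 1 + t := by linarith
  set α : ℝ := 1 - 2 * p with hα
  set β : ℝ := 2 * p ^ 2 with hβ
  have hα0 : 0 ≤ α := by rw [hα]; linarith
  have hβ0 : 0 < β := by rw [hβ]; positivity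
  have hδ : 1 / 2 ≤ α + β := by rw [hα, hβ]; nlinarith [sq_nonneg (2 * p - 1)]
  have hδ0 : 0 < α + β := by linarith
  set xb : ℝ := (α * t + β * (1 - p + p * t)) / (α + β) with hxb
  have hxb0 : 0 < xb := by
    rw [hxb]
    have : 0 < α * t + β * (1 - p + p * t) := by nlinarith
    positivity
  have hc : s - 2 ≤ -1 := by linarith
  have T1 := tangent_convex_neg hc ht hxb0
  have T2 := tangent_convex_neg hc hd hxb0
  have hcomb : (α + β) * xb ^ (s - 2) ≤ α * t ^ (s - 2) + β * (1 - p + p * t) ^ (s - 2) := by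
    have e0 : α * t + β * (1 - p + p * t) - (α + β) * xb = 0 := by
      rw [hxb]; field_simp; ring
    have hsum : α * (xb ^ (s - 2) + (s - 2) * xb ^ (s - 2 - 1) * (t - xb))
        + β * (xb ^ (s - 2) + (s - 2) * xb ^ (s - 2 - 1) * ((1 - p + p * t) - xb))
        = (α + β) * xb ^ (s - 2) := by
      linear_combination ((s - 2) * xb ^ (s - 2 - 1)) * e0
    linarith [add_le_add (mul_le_mul_of_nonneg_left T1 hα0)
      (mul_le_mul_of_nonneg_left T2 hβ0.le), hsum]
  have hxble : xb ≤ (1 + t) / 2 := by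
    rw [hxb, div_le_div_iff₀ hδ0 (by norm_num)]
    have hid : (1 + t) * (α + β) - (α * t + β * (1 - p + p * t)) * 2
        = (1 - t) * (1 - 2 * p) * (1 - 2 * p ^ 2) := by rw [hα, hβ]; ring
    nlinarith [mul_nonneg (mul_nonneg (by linarith : (0:ℝ) ≤ 1 - t)
      (by rw [hα] at hα0; linarith : (0:ℝ) ≤ 1 - 2 * p))
      (by nlinarith : (0:ℝ) ≤ 1 - 2 * p ^ 2)]
  have hmono : ((1 + t) / 2) ^ (s - 2) ≤ xb ^ (s - 2) :=
    Real.rpow_le_rpow_of_nonpos hxb0 hxble (by linarith)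
  have hhalf : ((1 + t) / 2) ^ (s - 2) = (1 + t) ^ (s - 2) * 2 ^ (2 - s) := by
    rw [Real.div_rpow h1t.le (by norm_num : (0:ℝ) ≤ 2)]
    rw [show (2:ℝ) ^ (2 - s) = ((2:ℝ) ^ (s - 2))⁻¹ by
      rw [← Real.rpow_neg (by norm_num : (0:ℝ) ≤ 2)]; ring_nf]
    ring
  have h22 : (2:ℝ) ^ (2 - s) = 2 * 2 ^ (1 - s) := by
    rw [show (2:ℝ) - s = 1 + (1 - s) by ring, Real.rpow_add (by norm_num), Real.rpow_one]
  have hfin : (1 / 2) * (2 * 2 ^ (1 - s)) * (1 + t) ^ (s - 2) ≤ (α + β) * xb ^ (s - 2) := by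
    have s1 : (α + β) * ((1 + t) ^ (s - 2) * 2 ^ (2 - s)) ≤ (α + β) * xb ^ (s - 2) := by
      rw [← hhalf]
      exact mul_le_mul_of_nonneg_left hmono hδ0.le
    have s2 : (1 / 2) * ((1 + t) ^ (s - 2) * 2 ^ (2 - s))
        ≤ (α + β) * ((1 + t) ^ (s - 2) * 2 ^ (2 - s)) := by
      have : (0:ℝ) ≤ (1 + t) ^ (s - 2) * 2 ^ (2 - s) := by positivity
      exact mul_le_mul_of_nonneg_right hδ this
    calc (1 / 2) * (2 * 2 ^ (1 - s)) * (1 + t) ^ (s - 2)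
        = (1 / 2) * ((1 + t) ^ (s - 2) * 2 ^ (2 - s)) := by rw [h22]; ring
      _ ≤ (α + β) * ((1 + t) ^ (s - 2) * 2 ^ (2 - s)) := s2
      _ ≤ (α + β) * xb ^ (s - 2) := s1
  calc 2 ^ (1 - s) * (1 + t) ^ (s - 2)
      = (1 / 2) * (2 * 2 ^ (1 - s)) * (1 + t) ^ (s - 2) := by ring
    _ ≤ (α + β) * xb ^ (s - 2) := hfin
    _ ≤ α * t ^ (s - 2) + β * (1 - p + p * t) ^ (s - 2) := hcomb
    _ = (1 - 2 * p) * t ^ (s - 2) + 2 * p ^ 2 * (1 - p + p * t) ^ (s - 2) := by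
        rw [hα, hβ]

/-- Easy case: `p ≤ 1/2` gives `0 ≤ KK''` pointwise on `(0,1]`. -/
lemma KK''_nonneg_easy (hs0 : 0 < s) (hs1 : s < 1) (hp0 : 0 < p) (hple : p ≤ 1 / 2)
    (hC : 1 / 2 ≤ C) (ht : 0 < t) (ht1 : t ≤ 1) : 0 ≤ KK'' s p C t := by
  have hp1 : p < 1 := by linarith
  rw [KK''_eq ht]
  have hf2 := f2_ge hs1 ht ht1
  have hP3 := P3 hs0 hs1 hp0 hple ht ht1
  have hX : (0:ℝ) < t ^ (2 - s) := rpow_pos_of_pos ht _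
  have hXτ : t ^ (2 - s) * t ^ (s - 2) = 1 := by
    rw [← Real.rpow_add ht]; norm_num
  have hmain : 0 ≤ C * f2 s t - p * f1 s p t := by
    have step := mul_le_mul_of_nonneg_left hP3 hX.le
    -- step : X * (B * E2) ≤ X * ((1-2p) τ + 2p² D2)
    have hCf : (1 / 2) * f2 s t ≤ C * f2 s t := by
      have : (0:ℝ) ≤ f2 s t := by linarith
      exact mul_le_mul_of_nonneg_right hC this
    have key : 0 ≤ (1 / 2) * f2 s t - p * f1 s p t := by
      simp only [f1, f2]
      nlinarith [step, hXτ]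
    linarith
  have hτ : (0:ℝ) < t ^ (s - 2) := rpow_pos_of_pos ht _
  have : (0:ℝ) ≤ s * (1 - s) * t ^ (s - 2) :=
    mul_nonneg (mul_nonneg hs0.le (by linarith)) hτ.le
  exact mul_nonneg this hmain

/-- If `KK'' ≥ 0 on `(t,1)` then `KK t ≥ 0`. -/
lemma right_nonneg (hp0 : 0 < p) (hp1 : p < 1) (ht0 : 0 < t) (ht1 : t < 1)
    (hK2 : ∀ u ∈ Ioo t 1, 0 ≤ KK'' s p C u) : 0 ≤ KK s p C t := by
  have hcont' : ContinuousOn (KK' s p C) (Icc t 1) := fun u hu =>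
    ((hasDerivAt_KK' hp0 hp1 (lt_of_lt_of_le ht0 hu.1)).continuousAt).continuousWithinAt
  have hdiff' : DifferentiableOn ℝ (KK' s p C) (interior (Icc t 1)) := by
    rw [interior_Icc]
    exact fun u hu => ((hasDerivAt_KK' hp0 hp1 (ht0.trans hu.1)).differentiableAt).differentiableWithinAt
  have hmono : MonotoneOn (KK' s p C) (Icc t 1) := by
    apply monotoneOn_of_deriv_nonneg (convex_Icc t 1) hcont' hdiff'
    intro u hu
    rw [interior_Icc] at hu
    rw [(hasDerivAt_KK' hp0 hp1 (ht0.trans hu.1)).deriv]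
    exact hK2 u hu
  have hKle : ∀ u ∈ Icc t 1, KK' s p C u ≤ 0 := by
    intro u hu
    have := hmono hu (right_mem_Icc.mpr ht1.le) hu.2
    rwa [KK'_one] at this
  have hcont : ContinuousOn (KK s p C) (Icc t 1) := fun u hu =>
    ((hasDerivAt_KK hp0 hp1 (lt_of_lt_of_le ht0 hu.1)).continuousAt).continuousWithinAt
  have hdiff : DifferentiableOn ℝ (KK s p C) (interior (Icc t 1)) := by
    rw [interior_Icc]
    exact fun u hu => ((hasDerivAt_KK hp0 hp1 (ht0.trans hu.1)).differentiableAt).differentiableWithinAt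
  have hanti : AntitoneOn (KK s p C) (Icc t 1) := by
    apply antitoneOn_of_deriv_nonpos (convex_Icc t 1) hcont hdiff
    intro u hu
    rw [interior_Icc] at hu
    rw [(hasDerivAt_KK hp0 hp1 (ht0.trans hu.1)).deriv]
    exact hKle u (Ioo_subset_Icc_self hu)
  have := hanti (left_mem_Icc.mpr ht1.le) (right_mem_Icc.mpr ht1.le) ht1.le
  rwa [KK_one] at this


/-- κ is antitone on `(0,1)` when `1/2 ≤ p < 1`. -/
lemma kap_antitone (hs0 : 0 < s) (hs1 : s < 1) (hp : 1 / 2 ≤ p) (hp1 : p < 1) :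
    AntitoneOn (kap s p) (Ioo 0 1) := by
  have hp0 : 0 < p := lt_of_lt_of_le (by norm_num) hp
  have hder : ∀ u ∈ Ioo (0:ℝ) 1, HasDerivAt (kap s p)
      ((p * -(p * (1 - p) * (2 - s) * (u ^ (1 - s) * (1 - p + p * u) ^ (s - 3))) * f2 s u
        - p * f1 s p u * -(2 ^ (1 - s) * (2 - s) * (u ^ (1 - s) * (1 + u) ^ (s - 3))))
        / f2 s u ^ 2) u := by
    intro u hu
    have hf2 : f2 s u ≠ 0 := by
      have h := f2_ge hs1 hu.1 hu.2.le
      intro h0; rw [h0] at h; linarith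
    exact ((hasDerivAt_f1 hp0 hp1 hu.1).const_mul p).div (hasDerivAt_f2 hu.1) hf2
  apply antitoneOn_of_deriv_nonpos (convex_Ioo 0 1)
  · exact fun u hu => (hder u hu).continuousAt.continuousWithinAt
  · rw [interior_Ioo]
    exact fun u hu => (hder u hu).differentiableAt.differentiableWithinAt
  · intro u hu
    rw [interior_Ioo] at hu
    rw [(hder u hu).deriv]
    have hM := Mineq hs0 hs1 hp hp1 hu.1 hu.2.le
    have hfac : (0:ℝ) ≤ p * (2 - s) * u ^ (1 - s) :=
      mul_nonneg (mul_nonneg hp0.le (by linarith)) (rpow_pos_of_pos hu.1 _).le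
    have hnum : p * -(p * (1 - p) * (2 - s) * (u ^ (1 - s) * (1 - p + p * u) ^ (s - 3))) * f2 s u
        - p * f1 s p u * -(2 ^ (1 - s) * (2 - s) * (u ^ (1 - s) * (1 + u) ^ (s - 3))) ≤ 0 := by
      nlinarith [mul_le_mul_of_nonneg_left hM hfac]
    exact div_nonpos_of_nonpos_of_nonneg hnum (sq_nonneg _)

/-- Main inequality in the normalized variable `t`. -/
theorem key_t (hs0 : 0 < s) (hs1 : s < 1) (hp0 : 0 < p) (hp1 : p < 1)
    (ht0 : 0 < t) (ht1 : t < 1) (hC : 1 / 2 ≤ C)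
    (hCq : (1 - p) ^ s - (1 - p) ≤ C * (2 ^ (1 - s) - 1)) :
    0 ≤ KK s p C t := by
  rcases le_or_gt p (1 / 2) with hple | hpgt
  · exact right_nonneg hp0 hp1 ht0 ht1 fun u hu =>
      KK''_nonneg_easy hs0 hs1 hp0 hple hC (ht0.trans hu.1) hu.2.le
  · have hp : 1 / 2 ≤ p := hpgt.le
    have hanti := kap_antitone hs0 hs1 hp hp1
    have htrans : ∀ u v : ℝ, u ∈ Ioo (0:ℝ) 1 → v ∈ Ioo (0:ℝ) 1 → u ≤ v →
        p * f1 s p u ≤ C * f2 s u → p * f1 s p v ≤ C * f2 s v := by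
      intro u v hu hv huv h
      have h2u : 0 < f2 s u := by have := f2_ge hs1 hu.1 hu.2.le; linarith
      have h2v : 0 < f2 s v := by have := f2_ge hs1 hv.1 hv.2.le; linarith
      have hk := hanti hu hv huv
      rw [kap, kap, div_le_div_iff₀ h2v h2u] at hk
      nlinarith [hk, h, h2u, h2v]
    have hKppos : ∀ v ∈ Ioo (0:ℝ) 1, p * f1 s p v ≤ C * f2 s v → 0 ≤ KK'' s p C v := by
      intro v hv h
      rw [KK''_eq hv.1]
      exact mul_nonneg (mul_nonneg (mul_nonneg hs0.le (by linarith))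
        (rpow_pos_of_pos hv.1 _).le) (by linarith)
    by_cases hU : p * f1 s p t ≤ C * f2 s t
    · exact right_nonneg hp0 hp1 ht0 ht1 fun u hu =>
        hKppos u ⟨ht0.trans hu.1, hu.2⟩
          (htrans t u ⟨ht0, ht1⟩ ⟨ht0.trans hu.1, hu.2⟩ hu.1.le hU)
    · push_neg at hU
      set φ : ℝ → ℝ := fun u => p * f1 s p u - C * f2 s u with hφ
      have hφcont : ∀ u : ℝ, 0 < u → ContinuousAt φ u := by
        intro u hu
        exact (((hasDerivAt_f1 hp0 hp1 hu).continuousAt.const_mul p).sub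
          ((hasDerivAt_f2 hu).continuousAt.const_mul C))
      have hφ1 : φ 1 < 0 := by
        simp only [hφ, f1_one, f2_one]
        nlinarith
      obtain ⟨δ, hδ0, hδ⟩ := Metric.continuousAt_iff.mp (hφcont 1 one_pos) (-φ 1) (by linarith)
      set t₁ : ℝ := max t (1 - δ / 2) with ht₁def
      have ht₁1 : t₁ < 1 := by apply max_lt ht1; linarith
      have ht₁t : t ≤ t₁ := le_max_left _ _
      have ht₁0 : 0 < t₁ := lt_of_lt_of_le ht0 ht₁t
      have hφt₁ : φ t₁ < 0 := by
        have hd1 : dist t₁ 1 < δ := by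
          rw [Real.dist_eq, abs_sub_lt_iff]
          constructor
          · linarith
          · have : 1 - δ / 2 ≤ t₁ := le_max_right _ _
            linarith
        have h2 := hδ hd1
        rw [Real.dist_eq] at h2
        have := abs_lt.mp h2
        linarith [this.2]
      set S : Set ℝ := {u : ℝ | u ∈ Icc t t₁ ∧ φ u ≤ 0} with hSdef
      have hne : S.Nonempty := ⟨t₁, ⟨⟨ht₁t, le_refl _⟩, hφt₁.le⟩⟩
      have hbdd : BddBelow S := ⟨t, fun u hu => hu.1.1⟩
      set T : ℝ := sInf S with hTdef
      have hTlb : t ≤ T := le_csInf hne fun u hu => hu.1.1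
      have hTub : T ≤ t₁ := csInf_le hbdd ⟨⟨ht₁t, le_refl _⟩, hφt₁.le⟩
      have hT0 : 0 < T := lt_of_lt_of_le ht0 hTlb
      have hT1 : T < 1 := lt_of_le_of_lt hTub ht₁1
      have hφT : φ T ≤ 0 := by
        by_contra hpos
        push_neg at hpos
        obtain ⟨ε, hε0, hε⟩ := Metric.continuousAt_iff.mp (hφcont T hT0) (φ T) hpos
        obtain ⟨u, huS, hult⟩ := (csInf_lt_iff hbdd hne).mp (show sInf S < T + ε by
          rw [← hTdef]; linarith)
        have hTu : T ≤ u := csInf_le hbdd huS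
        have hdu : dist u T < ε := by
          rw [Real.dist_eq, abs_sub_lt_iff]
          constructor <;> linarith
        have h2 := hε hdu
        rw [Real.dist_eq] at h2
        have h3 := abs_lt.mp h2
        have : 0 < φ u := by linarith [h3.1]
        linarith [huS.2]
      have hφpos : ∀ u : ℝ, 0 < u → u < T → 0 < φ u := by
        intro u hu0 huT
        by_contra hnp
        push_neg at hnp
        rcases lt_or_ge u t with hut | htu
        · have h := htrans u t ⟨hu0, by linarith⟩ ⟨ht0, ht1⟩ hut.le (by
            simp only [hφ] at hnp; linarith)
          linarith
        · have huS : u ∈ S := ⟨⟨htu, by linarith⟩, hnp⟩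
          have := csInf_le hbdd huS
          linarith
      have hKT : 0 ≤ KK s p C T := by
        apply right_nonneg hp0 hp1 hT0 hT1
        intro u hu
        refine hKppos u ⟨hT0.trans hu.1, hu.2⟩ ?_
        refine htrans T u ⟨hT0, hT1⟩ ⟨hT0.trans hu.1, hu.2⟩ hu.1.le ?_
        simp only [hφ] at hφT; linarith
      have hKcont : ContinuousOn (KK s p C) (Icc 0 T) := by
        have c1 : ContinuousOn (fun u : ℝ => (1 + u) ^ s) (Icc 0 T) :=
          (continuousOn_const.add continuousOn_id).rpow_const fun x _ => Or.inr hs0.le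
        have c2 : ContinuousOn (fun u : ℝ => u ^ s) (Icc 0 T) :=
          continuousOn_id.rpow_const fun x _ => Or.inr hs0.le
        have c3 : ContinuousOn (fun u : ℝ => (1 - p + p * u) ^ s) (Icc 0 T) :=
          (continuousOn_const.add (continuousOn_const.mul continuousOn_id)).rpow_const
            fun x _ => Or.inr hs0.le
        apply ContinuousOn.sub
        · exact continuousOn_const.mul
            (((continuousOn_const.mul c1).sub continuousOn_const).sub c2)
        · exact (c3.sub (continuousOn_const.mul c2)).sub continuousOn_const
      have hconc : ConcaveOn ℝ (Icc 0 T) (KK s p C) := by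
        apply concaveOn_of_hasDerivWithinAt2_nonpos (convex_Icc 0 T) hKcont
          (f' := KK' s p C) (f'' := KK'' s p C)
        · rw [interior_Icc]
          exact fun x hx => (hasDerivAt_KK hp0 hp1 hx.1).hasDerivWithinAt
        · rw [interior_Icc]
          exact fun x hx => (hasDerivAt_KK' hp0 hp1 hx.1).hasDerivWithinAt
        · rw [interior_Icc]
          intro x hx
          rw [KK''_eq hx.1]
          have hφx := hφpos x hx.1 hx.2
          simp only [hφ] at hφx
          have hfac : (0:ℝ) ≤ s * (1 - s) * x ^ (s - 2) :=
            mul_nonneg (mul_nonneg hs0.le (by linarith)) (rpow_pos_of_pos hx.1 _).le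
          exact mul_nonpos_of_nonneg_of_nonpos hfac (by linarith)
      have hK0 : 0 ≤ KK s p C 0 := by
        rw [KK_zero hs0]; linarith
      have hmin := hconc.ge_on_segment (left_mem_Icc.mpr hT0.le) (right_mem_Icc.mpr hT0.le)
        (by rw [segment_eq_Icc hT0.le]; exact ⟨ht0.le, hTlb⟩)
      calc (0:ℝ) ≤ min (KK s p C 0) (KK s p C T) := le_min hK0 hKT
        _ ≤ KK s p C t := hmin


theorem main_result
    (s a b p q : ℝ) (hs0 : 0 < s) (hs1 : s < 1) (ha : 0 < a) (hab : a < b)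
    (hp : 0 < p) (hq : 0 < q) (hpq : p + q = 1) :
    (p * a + q * b) ^ s - (p * a ^ s + q * b ^ s) ≤
      ((1 - s) * s ^ (s / (1 - s)) / ((2:ℝ) ^ (1 - s) - 1)) *
        (2 * ((a + b) / 2) ^ s - a ^ s - b ^ s) := by
  have hb : 0 < b := ha.trans hab
  have hqe : q = 1 - p := by linarith
  have hp1 : p < 1 := by linarith
  set A : ℝ := (1 - s) * s ^ (s / (1 - s)) with hA
  set C : ℝ := A / ((2:ℝ) ^ (1 - s) - 1) with hCdef
  set t : ℝ := a / b with htdef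
  have ht0 : 0 < t := div_pos ha hb
  have ht1 : t < 1 := (div_lt_one hb).mpr hab
  have hD : (0:ℝ) < 2 ^ (1 - s) - 1 := by
    have h := Real.rpow_lt_rpow_of_exponent_lt (by norm_num : (1:ℝ) < 2)
      (by linarith : (0:ℝ) < 1 - s)
    rw [Real.rpow_zero] at h
    linarith
  have h2s : (2:ℝ) ^ (1 - s) = 2 / 2 ^ s := by
    rw [show (1:ℝ) - s = 1 - s from rfl, Real.rpow_sub (by norm_num), Real.rpow_one]
  have hC2 : 1 / 2 ≤ C := by
    have h12 : ((1:ℝ)/2) ^ s ≤ A + 1/2 := rpow_le_A_add hs0 hs1 (by norm_num)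
    have e : ((1:ℝ)/2) ^ s = 1 / 2 ^ s := by
      rw [Real.div_rpow (by norm_num) (by norm_num), Real.one_rpow]
    have h2spos : (0:ℝ) < 2 ^ s := rpow_pos_of_pos (by norm_num) _
    rw [hCdef, le_div_iff₀ hD]
    rw [e] at h12
    rw [h2s]
    rw [h2s] at hD
    have := mul_le_mul_of_nonneg_left h12 (by norm_num : (0:ℝ) ≤ 2)
    -- 2*(1/2^s) ≤ 2*A + 1
    rw [mul_one_div] at this
    nlinarith [h2spos]
  have hCq : (1 - p) ^ s - (1 - p) ≤ C * (2 ^ (1 - s) - 1) := by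
    have := rpow_le_A_add hs0 hs1 (by linarith : (0:ℝ) ≤ 1 - p)
    have hCC : C * (2 ^ (1 - s) - 1) = A := div_mul_cancel₀ A hD.ne'
    rw [hCC]
    linarith
  have key := key_t hs0 hs1 hp hp1 ht0 ht1 hC2 hCq
  rw [KK, sub_nonneg] at key
  -- scaling
  have hbs : (0:ℝ) < b ^ s := rpow_pos_of_pos hb _
  have hat : a = b * t := by rw [htdef]; field_simp
  have hdt : (0:ℝ) ≤ 1 - p + p * t := by nlinarith
  have h1 : (p * a + q * b) ^ s = b ^ s * (1 - p + p * t) ^ s := by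
    rw [show p * a + q * b = b * (1 - p + p * t) by rw [hat, hqe]; ring,
      Real.mul_rpow hb.le hdt]
  have h2 : a ^ s = b ^ s * t ^ s := by
    rw [hat, Real.mul_rpow hb.le ht0.le]
  have h3 : ((a + b) / 2) ^ s = b ^ s * ((1 + t) / 2) ^ s := by
    rw [show (a + b) / 2 = b * ((1 + t) / 2) by rw [hat]; ring,
      Real.mul_rpow hb.le (by linarith)]
  have h4 : ((1 + t) / 2 : ℝ) ^ s = (1 + t) ^ s / 2 ^ s :=
    Real.div_rpow (by linarith : (0:ℝ) ≤ 1 + t) (by norm_num : (0:ℝ) ≤ 2) s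
  have h5 : 2 * ((1 + t) ^ s / 2 ^ s) = 2 ^ (1 - s) * (1 + t) ^ s := by
    rw [h2s]; ring
  have E1 : (p * a + q * b) ^ s - (p * a ^ s + q * b ^ s) = b ^ s * NN s p t := by
    rw [h1, h2, NN, hqe]; ring
  have E2 : 2 * ((a + b) / 2) ^ s - a ^ s - b ^ s = b ^ s * hh s t := by
    rw [h3, h4, h2, hh]
    linear_combination (b ^ s) * h5
  rw [E1, E2]
  calc b ^ s * NN s p t ≤ b ^ s * (C * hh s t) :=
        mul_le_mul_of_nonneg_left key hbs.le
    _ = C * (b ^ s * hh s t) := by ring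

end CharPow

end

theorem characteristic_number_pow_lt_one
    (s a b p q : ℝ) (hs0 : 0 < s) (hs1 : s < 1) (ha : 0 < a) (hab : a < b)
    (hp : 0 < p) (hq : 0 < q) (hpq : p + q = 1) :
    (p * a + q * b) ^ s - (p * a ^ s + q * b ^ s) ≤
      ((1 - s) * s ^ (s / (1 - s)) / ((2:ℝ) ^ (1 - s) - 1)) *
        (2 * ((a + b) / 2) ^ s - a ^ s - b ^ s) :=
  CharPow.main_result s a b p q hs0 hs1 ha hab hp hq hpq
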